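/- Let μ_α(t) = −2 tan(πt/(2α)) on (−α, α) for α ∈ (0, π/2), and Ĥ(t) = −2 tan t. Define Z_{μ_α}(t) = (3/2)(μ_α² − Ĥ²) + 2(μ_α' − Ĥ'). Then there exists t_c ∈ (0, π/2) (independent of α near π/2) such that Z_{μ_α}(t) > 0 for |t| ∈ (t_c, α), and there exists a constant C(α) ≤ 0 with cos²(t)·Z_{μ_α}(t) ≥ C(α) for all t ∈ (−α, α), where C(α) → 0 as α → π/2. -/

import Mathlib

open Real Filter

lemma tansq_abs (x : ℝ) : Real.tan x ^ 2 = Real.tan |x| ^ 2 := by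
  rcases abs_cases x with ⟨h, _⟩ | ⟨h, _⟩
  · rw [h]
  · rw [h, Real.tan_neg]; ring

lemma one_div_cos_sq {x : ℝ} (hx : Real.cos x ≠ 0) :
    1 / Real.cos x ^ 2 = 1 + Real.tan x ^ 2 := by
  rw [one_div, ← Real.inv_one_add_tan_sq hx, inv_inv]

lemma tan_tc_lower : 4 < Real.tan (π / 2 - 1/8) := by
  rw [Real.tan_pi_div_two_sub]
  have h8 : (0:ℝ) < 1/8 := by norm_num
  have hsin : Real.sin (1/8) < 1/8 := Real.sin_lt h8
  have hsinpos : 0 < Real.sin (1/8) :=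
    Real.sin_pos_of_pos_of_lt_pi h8 (by nlinarith [Real.pi_gt_three])
  have hcos : (1:ℝ)/2 < Real.cos (1/8) := by
    have := Real.cos_lt_cos_of_nonneg_of_le_pi (by norm_num : (0:ℝ) ≤ 1/8)
      (by linarith [Real.pi_gt_three] : π/3 ≤ π) (by nlinarith [Real.pi_gt_three])
    rwa [Real.cos_pi_div_three] at this
  have htanpos : 0 < Real.tan (1/8) := by
    rw [Real.tan_eq_sin_div_cos]; positivity
  have htan : Real.tan (1/8) < 1/4 := by
    rw [Real.tan_eq_sin_div_cos, div_lt_iff₀ (by linarith)]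
    nlinarith
  rw [show (Real.tan (1/8))⁻¹ = 1 / Real.tan (1/8) from (one_div _).symm,
    lt_div_iff₀ htanpos]
  nlinarith

set_option maxHeartbeats 1000000 in
theorem stmt17 (H : ℝ → ℝ) (hH : H = fun t => -2 * Real.tan t)
    (μ : ℝ → ℝ → ℝ)
    (hμ : μ = fun α t => -2 * Real.tan (π * t / (2 * α)))
    (Z : ℝ → ℝ → ℝ)
    (hZ : Z = fun α t => (3 / 2) * ((μ α t) ^ 2 - (H t) ^ 2)
      + 2 * (deriv (μ α) t - deriv H t)) :
    ∃ tc ∈ Set.Ioo 0 (π / 2), ∃ C : ℝ → ℝ,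
      (∀ α ∈ Set.Ioo tc (π / 2),
        (∀ t, tc < |t| → |t| < α → 0 < Z α t) ∧
        C α ≤ 0 ∧
        (∀ t ∈ Set.Ioo (-α) α, C α ≤ Real.cos t ^ 2 * Z α t)) ∧
      Tendsto C (nhdsWithin (π / 2) (Set.Iio (π / 2))) (nhds 0) := by
  subst hH hμ hZ
  have hpi : (3:ℝ) < π := Real.pi_gt_three
  refine ⟨π/2 - 1/8, ⟨by linarith, by linarith⟩, fun α => 4 - 2*π/α, ?_, ?_⟩
  · intro α hα
    obtain ⟨hα1, hα2⟩ := hα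
    have hα0 : 0 < α := by linarith
    obtain ⟨c, hc⟩ : ∃ c : ℝ, c = π / (2*α) := ⟨_, rfl⟩
    have hc1 : 1 < c := by
      rw [hc, lt_div_iff₀ (by linarith)]; linarith
    have hc11 : c < 11/10 := by
      rw [hc, div_lt_iff₀ (by linarith)]; nlinarith
    have hcα : c * α = π/2 := by rw [hc]; field_simp
    have h64 : (0:ℝ) < 6 - 4*c := by linarith
    -- formula for Z
    have hform0 : ∀ t : ℝ, |t| < α →
        (3 / 2 : ℝ) * ((-2 * Real.tan (π * t / (2*α))) ^ 2 - (-2 * Real.tan t) ^ 2)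
          + 2 * (deriv (fun x => -2 * Real.tan (π * x / (2*α))) t
            - deriv (fun x => -2 * Real.tan x) t)
        = (6 - 4*c) * Real.tan (c*t)^2 - 2 * Real.tan t ^2 + (4 - 4*c) := by
      intro t ht
      have harg : ∀ x : ℝ, π * x / (2*α) = c * x := by
        intro x; rw [hc]; field_simp
      have htpi : |t| < π/2 := by nlinarith
      have hct : |c*t| < π/2 := by
        rw [abs_mul, abs_of_pos (by linarith : (0:ℝ) < c)]
        calc c * |t| < c * α := by nlinarith [abs_nonneg t]
        _ = π/2 := hcα
      have hcost : Real.cos t ≠ 0 :=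
        ne_of_gt (Real.cos_pos_of_mem_Ioo (Set.mem_Ioo.2 (abs_lt.1 htpi)))
      have hcosct : Real.cos (c*t) ≠ 0 :=
        ne_of_gt (Real.cos_pos_of_mem_Ioo (Set.mem_Ioo.2 (abs_lt.1 hct)))
      have dH : deriv (fun x => -2 * Real.tan x) t = -2 * (1 / Real.cos t ^ 2) :=
        ((Real.hasDerivAt_tan hcost).const_mul (-2)).deriv
      have hfun : (fun x => -2 * Real.tan (π * x / (2*α)))
          = fun x => -2 * Real.tan (c*x) := funext fun x => by rw [harg x]
      have h0 : HasDerivAt (fun x : ℝ => c * x) c t := by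
        simpa using HasDerivAt.const_mul c (hasDerivAt_id t)
      have h1 : HasDerivAt (fun x => Real.tan (c*x)) (1 / Real.cos (c*t) ^ 2 * c) t := by
        simpa [Function.comp_def] using (Real.hasDerivAt_tan (x := c*t) hcosct).comp t h0
      have dμ : deriv (fun x => -2 * Real.tan (π * x / (2*α)))  t
          = -2 * (1 / Real.cos (c*t) ^ 2 * c) := by
        rw [hfun]; exact (h1.const_mul (-2)).deriv
      rw [dH, dμ, harg t, one_div_cos_sq hcost, one_div_cos_sq hcosct]
      ring
    refine ⟨?_, ?_, ?_⟩
    · -- positivity for tc < |t| < α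
      intro t htc htα
      show 0 < (3 / 2 : ℝ) * ((-2 * Real.tan (π * t / (2*α))) ^ 2 - (-2 * Real.tan t) ^ 2)
          + 2 * (deriv (fun x => -2 * Real.tan (π * x / (2*α))) t
            - deriv (fun x => -2 * Real.tan x) t)
      rw [hform0 t htα, tansq_abs t, tansq_abs (c*t), abs_mul,
        abs_of_pos (by linarith : (0:ℝ) < c)]
      set s := |t| with hs
      have hstc : π/2 - 1/8 < s := htc
      have hs0 : (0:ℝ) < s := by linarith
      have hsα : s < α := htα
      have hcs : c*s < π/2 := by
        calc c * s < c * α := by nlinarith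
        _ = π/2 := hcα
      have hspi : s < π/2 := by linarith
      have hcoss : 0 < Real.cos s := Real.cos_pos_of_mem_Ioo ⟨by linarith, hspi⟩
      have hcoscs : 0 < Real.cos (c*s) := Real.cos_pos_of_mem_Ioo ⟨by nlinarith, hcs⟩
      set T := Real.tan s with hT'
      have hT : 4 < T := by
        rw [hT']
        exact lt_trans tan_tc_lower
          (Real.tan_lt_tan_of_lt_of_lt_pi_div_two (by linarith) hspi hstc)
      have hdiff : Real.tan (c*s) - T = Real.sin ((c-1)*s) / (Real.cos (c*s) * Real.cos s) := by
        rw [hT', Real.tan_eq_sin_div_cos, Real.tan_eq_sin_div_cos,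
          show (c-1)*s = c*s - s by ring, Real.sin_sub]
        field_simp
      have hx0 : 0 < (c-1)*s := by nlinarith
      have hx1 : (c-1)*s ≤ 1 := by nlinarith
      have hsin : (c-1)*s/2 ≤ Real.sin ((c-1)*s) := by
        have h := Real.sin_gt_sub_cube hx0
        nlinarith [sq_nonneg ((c-1)*s)]
      have hcosle : Real.cos (c*s) ≤ Real.cos s := by
        have hle : s ≤ c*s := by nlinarith
        rcases eq_or_lt_of_le hle with h | h
        · rw [← h]
        · exact (Real.cos_lt_cos_of_nonneg_of_le_pi hs0.le (by linarith) h).le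
      have hdd : Real.cos (c*s) * Real.cos s ≤ Real.cos s ^ 2 := by
        nlinarith
      have h1 : ((c-1)*s/2) / Real.cos s ^2
          ≤ Real.sin ((c-1)*s) / (Real.cos (c*s) * Real.cos s) := by
        apply div_le_div₀ (by nlinarith) hsin (by positivity) hdd
      have hstep : T + ((c-1)*s/2) / Real.cos s ^2 ≤ Real.tan (c*s) := by
        linarith [hdiff, h1]
      set k := ((c-1)*s/2) / Real.cos s ^2 with hkdef
      have hk : k = (c-1)*s*(T^2+1)/2 := by
        rw [hkdef, div_eq_mul_one_div, one_div_cos_sq hcoss.ne', hT']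
        ring
      have hk0 : 0 ≤ k := by
        rw [hkdef]; exact div_nonneg (by nlinarith) (by positivity)
      have hsq : (T + k)^2 ≤ Real.tan (c*s)^2 :=
        pow_le_pow_left₀ (by linarith) hstep 2
      have hid : (6-4*c)*(T+k)^2 - 2*T^2 + (4-4*c)
          = (c-1)*(T^2+1)*((6-4*c)*s*T - 4) + (6-4*c)*k^2 := by
        rw [hk]; ring
      have hmul := mul_le_mul_of_nonneg_left hsq h64.le
      have hsT : 11/2 ≤ s*T := by
        nlinarith [mul_pos (show (0:ℝ) < s - 11/8 by nlinarith)
          (show (0:ℝ) < T - 4 by linarith)]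
      have hpos2 : 0 < (c-1)*(T^2+1)*((6-4*c)*s*T - 4) := by
        apply mul_pos (mul_pos (by linarith) (by positivity))
        nlinarith [mul_pos (show (0:ℝ) < 6-4*c - 8/5 by linarith)
          (show (0:ℝ) < s*T by nlinarith)]
      nlinarith [hmul, hid, hpos2, mul_nonneg h64.le (sq_nonneg k)]
    · -- C α ≤ 0
      show 4 - 2*π/α ≤ 0
      rw [sub_nonpos, le_div_iff₀ hα0]
      linarith
    · -- lower bound
      intro t ht
      obtain ⟨ht1, ht2⟩ := ht
      have htabs : |t| < α := abs_lt.2 ⟨by linarith, ht2⟩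
      show 4 - 2*π/α ≤ Real.cos t ^ 2 *
        ((3 / 2 : ℝ) * ((-2 * Real.tan (π * t / (2*α))) ^ 2 - (-2 * Real.tan t) ^ 2)
          + 2 * (deriv (fun x => -2 * Real.tan (π * x / (2*α))) t
            - deriv (fun x => -2 * Real.tan x) t))
      rw [hform0 t htabs]
      have h4c : (2*π/α : ℝ) = 4*c := by rw [hc]; field_simp; ring
      have htpi : |t| < π/2 := by nlinarith
      have hct : |c*t| < π/2 := by
        rw [abs_mul, abs_of_pos (by linarith : (0:ℝ) < c)]
        calc c * |t| < c * α := by nlinarith [abs_nonneg t]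
        _ = π/2 := hcα
      have hcost : 0 < Real.cos t :=
        Real.cos_pos_of_mem_Ioo (Set.mem_Ioo.2 (abs_lt.1 htpi))
      have htt : Real.tan t ^2 ≤ Real.tan (c*t)^2 := by
        rw [tansq_abs t, tansq_abs (c*t), abs_mul,
          abs_of_pos (by linarith : (0:ℝ) < c)]
        have hle : |t| ≤ c*|t| := by nlinarith [abs_nonneg t]
        have hcabs : c*|t| < π/2 := by
          calc c * |t| < c * α := by nlinarith [abs_nonneg t]
          _ = π/2 := hcα
        have hmono := Real.strictMonoOn_tan.monotoneOn
          (Set.mem_Ioo.2 ⟨by nlinarith [abs_nonneg t], by linarith⟩)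
          (Set.mem_Ioo.2 ⟨by nlinarith [abs_nonneg t], hcabs⟩) hle
        exact pow_le_pow_left₀
          (Real.tan_nonneg_of_nonneg_of_le_pi_div_two (abs_nonneg t) (by linarith)) hmono 2
      have hct2 : Real.cos t ^2 * Real.tan t ^2 = Real.sin t ^2 := by
        rw [Real.tan_eq_sin_div_cos]
        field_simp
      have hmul2 : Real.cos t ^2 * Real.tan t ^2 ≤ Real.cos t ^2 * Real.tan (c*t)^2 :=
        mul_le_mul_of_nonneg_left htt (sq_nonneg _)
      have hmul3 := mul_le_mul_of_nonneg_left hmul2 h64.le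
      rw [h4c]
      nlinarith [hmul3, hct2, Real.sin_sq_add_cos_sq t, sq_nonneg (Real.cos t)]
  · -- tendsto
    have hcont : ContinuousAt (fun α : ℝ => 4 - 2*π/α) (π/2) := by
      have h : (π/2 : ℝ) ≠ 0 := by positivity
      fun_prop (disch := assumption)
    have hval : (4 - 2*π/(π/2) : ℝ) = 0 := by
      field_simp
      ring
    have h := hcont.tendsto
    rw [hval] at h
    exact h.mono_left nhdsWithin_le_nhds
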